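/- For n ≥ 3, let P_n be the double directed cycle on vertex set Z_n with edges e_i from i to i+1 and e_i' from i+1 to i for all i ∈ Z_n (indices mod n). Then the facets of the pure (n−2)-skeleton of Dlf(P_n) are precisely the sets {e_i, e_{i+1}, …, e_{i−2}} and {e_i', e_{i+1}', …, e_{i−2}'} for i ∈ Z_n, this pure skeleton is disconnected, and hence Dlf(P_n) is not sequentially Cohen-Macaulay and not shellable. -/

import Mathlib

namespace ArXiv

/-! ## Multidigraphs and their directed-forest complexes.
A multidigraph on vertex type `V` with edge type `E` is given by source and
target maps `s t : E → V`. -/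

/-- `σ` induces a directed cycle (of some length `n ≥ 1`) in the multidigraph `(s, t)`:
its edges can be arranged cyclically, with pairwise distinct sources, the target of each
edge being the source of the next one. -/
def IsDirCycle {V E : Type} (s t : E → V) (n : ℕ) (σ : Finset E) : Prop :=
  0 < n ∧ ∃ g : ZMod n → E, Function.Injective g ∧
    (∀ e, e ∈ σ ↔ ∃ i, g i = e) ∧
    Function.Injective (fun i => s (g i)) ∧
    (∀ i, t (g i) = s (g (i + 1)))

/-- No subset of `σ` induces a directed cycle. -/
def NoDirCycleIn {V E : Type} (s t : E → V) (σ : Finset E) : Prop :=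
  ∀ (n : ℕ) (τ : Finset E), τ ⊆ σ → ¬ IsDirCycle s t n τ

/-- `σ` induces a vertex-disjoint union of directed paths: all sources are distinct,
all targets are distinct, and there is no directed cycle inside `σ`. -/
def IsLinearForest {V E : Type} (s t : E → V) (σ : Finset E) : Prop :=
  (∀ e ∈ σ, ∀ f ∈ σ, e ≠ f → s e ≠ s f) ∧
  (∀ e ∈ σ, ∀ f ∈ σ, e ≠ f → t e ≠ t f) ∧
  NoDirCycleIn s t σ

/-- `σ` induces a directed forest: no two distinct edges share a target and there is
no directed cycle inside `σ`. -/
def IsDirForest {V E : Type} (s t : E → V) (σ : Finset E) : Prop :=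
  (∀ e ∈ σ, ∀ f ∈ σ, e ≠ f → t e ≠ t f) ∧
  NoDirCycleIn s t σ

/-- The directed linear forest complex `Dlf(D)`, as its set of faces. -/
def Dlf {V E : Type} (s t : E → V) : Set (Finset E) := {σ | IsLinearForest s t σ}

/-- The directed tree complex `DT(D)`, as its set of faces. -/
def DT {V E : Type} (s t : E → V) : Set (Finset E) := {σ | IsDirForest s t σ}

/-- The edges `e` and `f` have the same unordered pair of endpoints. -/
def SameEnds {V E : Type} (s t : E → V) (e f : E) : Prop :=
  (s e = s f ∧ t e = t f) ∨ (s e = t f ∧ t e = s f)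

/-- Adjacency in the linear-forest conflict graph `G^lf_D`. -/
def LFAdj {V E : Type} (s t : E → V) (e f : E) : Prop :=
  e ≠ f ∧ (s e = s f ∨ t e = t f ∨ SameEnds s t e f)

/-- Adjacency in the tree conflict graph `G^t_D`. -/
def TAdj {V E : Type} (s t : E → V) (e f : E) : Prop :=
  e ≠ f ∧ (t e = t f ∨ SameEnds s t e f)

/-- `σ` is an independent set for the adjacency relation `A`. -/
def IndepIn {E : Type} (A : E → E → Prop) (σ : Finset E) : Prop :=
  ∀ e ∈ σ, ∀ f ∈ σ, ¬ A e f

/-- `D` has no directed cycle of length at least 3 (directed 2-cycles are allowed). -/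
def TwoAcyclic {V E : Type} (s t : E → V) : Prop :=
  ∀ (n : ℕ) (σ : Finset E), 3 ≤ n → ¬ IsDirCycle s t n σ

/-- `D` has no directed cycles at all. -/
def Acyclic {V E : Type} (s t : E → V) : Prop :=
  ∀ (n : ℕ) (σ : Finset E), ¬ IsDirCycle s t n σ

/-- Adjacency in the underlying (simple, undirected) graph of `D`. -/
def UAdj {V E : Type} (s t : E → V) (u v : V) : Prop :=
  u ≠ v ∧ ∃ e, (s e = u ∧ t e = v) ∨ (s e = v ∧ t e = u)

/-- The underlying graph of `D` is a forest: it contains no cycle of length `≥ 3`. -/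
def UnderlyingForest {V E : Type} (s t : E → V) : Prop :=
  ¬ ∃ m : ℕ, 3 ≤ m ∧ ∃ h : ZMod m → V, Function.Injective h ∧
    ∀ i, UAdj s t (h i) (h (i + 1))

/-- An alternating closed trail: a cyclic sequence of distinct edges in which any two
cyclically consecutive edges share a source or share a target. -/
def HasAltClosedTrail {V E : Type} (s t : E → V) : Prop :=
  ∃ k : ℕ, 2 ≤ k ∧ ∃ g : ZMod k → E, Function.Injective g ∧
    ∀ i, s (g i) = s (g (i + 1)) ∨ t (g i) = t (g (i + 1))

/-- `D` has no induced subgraph isomorphic to `L₂`, the double directed string on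
three vertices. -/
def IsL2Free {V E : Type} (s t : E → V) : Prop :=
  ¬ ∃ a b c : V, a ≠ b ∧ b ≠ c ∧ a ≠ c ∧
    ∃ e1 e2 e3 e4 : E,
      e1 ≠ e2 ∧ e1 ≠ e3 ∧ e1 ≠ e4 ∧ e2 ≠ e3 ∧ e2 ≠ e4 ∧ e3 ≠ e4 ∧
      s e1 = a ∧ t e1 = b ∧ s e2 = b ∧ t e2 = a ∧
      s e3 = b ∧ t e3 = c ∧ s e4 = c ∧ t e4 = b ∧
      ∀ f : E, s f ∈ ({a, b, c} : Set V) → t f ∈ ({a, b, c} : Set V) →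
        f ∈ ({e1, e2, e3, e4} : Set E)

/-- The relation `A` (a graph on `β`) has an induced cycle of length at least 4. -/
def HasInducedCycleGE4 {β : Type} (A : β → β → Prop) : Prop :=
  ∃ n : ℕ, 4 ≤ n ∧ ∃ g : ZMod n → β, Function.Injective g ∧
    ∀ i j : ZMod n, i ≠ j → (A (g i) (g j) ↔ j = i + 1 ∨ i = j + 1)

/-! ## Simplicial complexes (as sets of faces). -/

/-- `σ` is a facet (inclusion-maximal face) of `Δ`. -/
def IsFacetOf {α : Type} (Δ : Set (Finset α)) (σ : Finset α) : Prop :=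
  σ ∈ Δ ∧ ∀ τ ∈ Δ, σ ⊆ τ → σ = τ

/-- Deletion of the vertex `v` in `Δ`. -/
def delC {α : Type} (Δ : Set (Finset α)) (v : α) : Set (Finset α) :=
  {τ ∈ Δ | v ∉ τ}

/-- Link of the vertex `v` in `Δ`. -/
def linkC {α : Type} [DecidableEq α] (Δ : Set (Finset α)) (v : α) : Set (Finset α) :=
  {τ | τ ∈ Δ ∧ v ∉ τ ∧ insert v τ ∈ Δ}

/-- `v` is a shedding vertex: every facet of the deletion is a facet of `Δ`. -/
def SheddingVertex {α : Type} (Δ : Set (Finset α)) (v : α) : Prop :=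
  ∀ σ, IsFacetOf (delC Δ v) σ → IsFacetOf Δ σ

/-- Vertex decomposability. -/
inductive VertexDecomposable {α : Type} [DecidableEq α] : Set (Finset α) → Prop
  | void : VertexDecomposable (∅ : Set (Finset α))
  | simplex (σ : Finset α) : VertexDecomposable {τ | τ ⊆ σ}
  | shed (Δ : Set (Finset α)) (v : α) :
      VertexDecomposable (linkC Δ v) → VertexDecomposable (delC Δ v) →
      SheddingVertex Δ v → VertexDecomposable Δ

/-- Shellability (in the non-pure sense of Björner–Wachs). -/
def Shellable {α : Type} (Δ : Set (Finset α)) : Prop :=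
  ∃ (m : ℕ) (F : Fin m → Finset α), Function.Injective F ∧
    (∀ σ, IsFacetOf Δ σ ↔ ∃ i, F i = σ) ∧
    ∀ i : Fin m, 0 < (i : ℕ) → ∀ τ : Finset α, τ ⊆ F i → (∃ j, j < i ∧ τ ⊆ F j) →
      ∃ ρ : Finset α, ρ ⊆ F i ∧ (∃ j, j < i ∧ ρ ⊆ F j) ∧
        ρ.card + 1 = (F i).card ∧ τ ⊆ ρ

/-- The pure `d`-skeleton of `Δ`: the subcomplex generated by the `d`-dimensional faces. -/
def pureSkel {α : Type} (Δ : Set (Finset α)) (d : ℕ) : Set (Finset α) :=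
  {τ | ∃ σ ∈ Δ, σ.card = d + 1 ∧ τ ⊆ σ}

/-- Link of a face `σ` in `Δ`. -/
def linkFaceC {α : Type} [DecidableEq α] (Δ : Set (Finset α)) (σ : Finset α) :
    Set (Finset α) :=
  {τ | τ ∩ σ = ∅ ∧ τ ∪ σ ∈ Δ}

/-- Connectivity of a simplicial complex: any two vertices are joined by an edge path. -/
def ComplexConnected {α : Type} [DecidableEq α] (Δ : Set (Finset α)) : Prop :=
  ∀ u v : α, ({u} : Finset α) ∈ Δ → ({v} : Finset α) ∈ Δ →
    Relation.ReflTransGen (fun a b => ({a, b} : Finset α) ∈ Δ) u v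

/-! ## Simplicial homology via ordered chains, and (sequential) Cohen–Macaulayness. -/

/-- A chain (a function on ordered tuples) is supported on faces of `Δ`. -/
def validChain {α K : Type} [DecidableEq α] [Field K] {k : ℕ}
    (Δ : Set (Finset α)) (c : (Fin k → α) → K) : Prop :=
  ∀ g, c g ≠ 0 → (Finset.univ.image g) ∈ Δ

/-- The simplicial boundary operator on ordered chains. -/
def bdry {α K : Type} [Fintype α] [Field K] {k : ℕ}
    (c : (Fin (k + 2) → α) → K) : (Fin (k + 1) → α) → K :=
  fun g => ∑ j : Fin (k + 2), (-1 : K) ^ (j : ℕ) * ∑ v : α, c (Fin.insertNth j v g)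

/-- Vanishing of the `i`-th reduced simplicial homology of `Δ` with coefficients in `K`
(computed with ordered chains; degree `0` uses the augmentation). -/
def RHomZero (α K : Type) [Fintype α] [DecidableEq α] [Field K]
    (Δ : Set (Finset α)) : ℕ → Prop
  | 0 => ∀ c : (Fin 1 → α) → K, validChain Δ c → (∑ g : Fin 1 → α, c g) = 0 →
      ∃ b : (Fin 2 → α) → K, validChain Δ b ∧ bdry b = c
  | (i + 1) => ∀ c : (Fin (i + 2) → α) → K, validChain Δ c → bdry c = 0 →
      ∃ b : (Fin (i + 3) → α) → K, validChain Δ b ∧ bdry b = c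

/-- `Δ` is Cohen–Macaulay over `K`: for every face `σ`, the reduced homology of its
link vanishes in all degrees strictly below the dimension of the link. -/
def IsCM (α K : Type) [Fintype α] [DecidableEq α] [Field K]
    (Δ : Set (Finset α)) : Prop :=
  ∀ σ ∈ Δ, ∀ i : ℕ, (∃ τ ∈ linkFaceC Δ σ, i + 2 ≤ τ.card) →
    RHomZero α K (linkFaceC Δ σ) i

/-- `Δ` is sequentially Cohen–Macaulay over `K`: every pure skeleton is Cohen–Macaulay. -/
def IsSCM (α K : Type) [Fintype α] [DecidableEq α] [Field K]
    (Δ : Set (Finset α)) : Prop :=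
  ∀ d : ℕ, IsCM α K (pureSkel Δ d)

/-! ## The double directed string `Lₙ` and the double directed cycle `Pₙ`. -/

/-- Source map of `Lₙ`: `inl i` is the edge `i → i+1`, `inr i` the edge `i+1 → i`. -/
def sL (n : ℕ) : Fin n ⊕ Fin n → Fin (n + 1) := Sum.elim Fin.castSucc Fin.succ

/-- Target map of `Lₙ`. -/
def tL (n : ℕ) : Fin n ⊕ Fin n → Fin (n + 1) := Sum.elim Fin.succ Fin.castSucc

/-- Source map of `Pₙ`: `inl i` is the edge `eᵢ : i → i+1`, `inr i` is `eᵢ' : i+1 → i`. -/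
def sP (n : ℕ) : ZMod n ⊕ ZMod n → ZMod n := Sum.elim id (fun i => i + 1)

/-- Target map of `Pₙ`. -/
def tP (n : ℕ) : ZMod n ⊕ ZMod n → ZMod n := Sum.elim (fun i => i + 1) id


section Helpers

open Finset Sum

variable {n : ℕ}

@[simp] lemma sP_inl (a : ZMod n) : sP n (inl a) = a := rfl
@[simp] lemma sP_inr (a : ZMod n) : sP n (inr a) = a + 1 := rfl
@[simp] lemma tP_inl (a : ZMod n) : tP n (inl a) = a + 1 := rfl
@[simp] lemma tP_inr (a : ZMod n) : tP n (inr a) = a := rfl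

lemma one_ne_zero' (hn : 3 ≤ n) : (1 : ZMod n) ≠ 0 := by
  haveI : Fact (1 < n) := ⟨by omega⟩
  exact one_ne_zero

lemma two_ne_zero' (hn : 3 ≤ n) : (2 : ZMod n) ≠ 0 := by
  haveI : NeZero n := ⟨by omega⟩
  intro h
  rw [show ((2 : ZMod n)) = ((2 : ℕ) : ZMod n) by norm_cast,
    ZMod.natCast_eq_zero_iff] at h
  have := Nat.le_of_dvd (by norm_num) h
  omega

lemma shift_surjective [NeZero n] {m : ℕ} (f : ZMod m → ZMod n) (c : ZMod n) (hc : IsUnit c)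
    (hstep : ∀ i, f (i + 1) = f i + c) : Function.Surjective f := by
  have key : ∀ k : ℕ, f (k : ZMod m) = f 0 + (k : ZMod n) * c := by
    intro k
    induction k with
    | zero => simp
    | succ k ih =>
      have : ((k + 1 : ℕ) : ZMod m) = (k : ZMod m) + 1 := by push_cast; ring
      rw [this, hstep, ih]; push_cast; ring
  intro z
  refine ⟨(((z - f 0) * ↑hc.unit⁻¹ : ZMod n).val : ℕ), ?_⟩
  rw [key, ZMod.natCast_zmod_val, mul_assoc, IsUnit.val_inv_mul, mul_one]
  ring

lemma inl_cycle_full [NeZero n] {m : ℕ} {τ : Finset (ZMod n ⊕ ZMod n)}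
    (hsub : ∀ e ∈ τ, ∃ a, e = inl a)
    (hcyc : IsDirCycle (sP n) (tP n) m τ) : ∀ a : ZMod n, inl a ∈ τ := by
  obtain ⟨hm, g, hginj, hgmem, hsinj, hstep⟩ := hcyc
  have hg : ∀ i, ∃ a, g i = inl a := fun i => hsub _ ((hgmem (g i)).2 ⟨i, rfl⟩)
  have hgi : ∀ i, g i = inl (tP n (g i) - 1) := by
    intro i; obtain ⟨a, ha⟩ := hg i; rw [ha]; simp
  have hstep' : ∀ i : ZMod m, tP n (g (i + 1)) - 1 = tP n (g i) - 1 + 1 := by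
    intro i
    have e2 : sP n (g (i + 1)) = tP n (g (i + 1)) - 1 := by
      conv_lhs => rw [hgi (i + 1)]
      simp
    have h := hstep i
    rw [e2] at h
    rw [← h]; ring
  have hsurj := shift_surjective (fun i => tP n (g i) - 1) 1 isUnit_one hstep'
  intro a
  obtain ⟨i, hi⟩ := hsurj a
  have : g i = inl a := by rw [hgi i]; exact congrArg inl hi
  rw [← this]; exact (hgmem _).2 ⟨i, rfl⟩

lemma inr_cycle_full [NeZero n] {m : ℕ} {τ : Finset (ZMod n ⊕ ZMod n)}
    (hsub : ∀ e ∈ τ, ∃ a, e = inr a)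
    (hcyc : IsDirCycle (sP n) (tP n) m τ) : ∀ a : ZMod n, inr a ∈ τ := by
  obtain ⟨hm, g, hginj, hgmem, hsinj, hstep⟩ := hcyc
  have hg : ∀ i, ∃ a, g i = inr a := fun i => hsub _ ((hgmem (g i)).2 ⟨i, rfl⟩)
  have hgi : ∀ i, g i = inr (sP n (g i) - 1) := by
    intro i; obtain ⟨a, ha⟩ := hg i; rw [ha]; simp
  have hstep' : ∀ i : ZMod m, sP n (g (i + 1)) - 1 = sP n (g i) - 1 + (-1) := by
    intro i
    have e1 : tP n (g i) = sP n (g i) - 1 := by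
      conv_lhs => rw [hgi i]
      simp
    have h' : sP n (g (i + 1)) = sP n (g i) - 1 := (hstep i).symm.trans e1
    rw [h']; ring
  have hsurj := shift_surjective (fun i => sP n (g i) - 1) (-1) isUnit_one.neg hstep'
  intro a
  obtain ⟨i, hi⟩ := hsurj a
  have : g i = inr a := by rw [hgi i]; exact congrArg inr hi
  rw [← this]; exact (hgmem _).2 ⟨i, rfl⟩

lemma zmod2_cases : ∀ i : ZMod 2, i = 0 ∨ i = 1 := by decide

lemma two_cycle (hn : 3 ≤ n) (a : ZMod n) :
    IsDirCycle (sP n) (tP n) 2 ({inl a, inr a} : Finset (ZMod n ⊕ ZMod n)) := by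
  have h10 : (1 : ZMod 2) ≠ 0 := by decide
  set g : ZMod 2 → ZMod n ⊕ ZMod n := fun i => if i = 0 then inl a else inr a with hgdef
  have hg0 : g 0 = inl a := if_pos rfl
  have hg1 : g 1 = inr a := if_neg h10
  have hane : a ≠ a + 1 := fun h => one_ne_zero' hn (left_eq_add.mp h)
  refine ⟨by norm_num, g, ?_, ?_, ?_, ?_⟩
  · intro i j h
    rcases zmod2_cases i with rfl | rfl <;> rcases zmod2_cases j with rfl | rfl
    · rfl
    · rw [hg0, hg1] at h; exact absurd h (by simp)
    · rw [hg1, hg0] at h; exact absurd h.symm (by simp)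
    · rfl
  · intro e
    constructor
    · intro he
      rcases Finset.mem_insert.mp he with rfl | he
      · exact ⟨0, hg0⟩
      · rw [Finset.mem_singleton.mp he]; exact ⟨1, hg1⟩
    · rintro ⟨i, rfl⟩
      rcases zmod2_cases i with rfl | rfl
      · rw [hg0]; exact Finset.mem_insert_self _ _
      · rw [hg1]; exact Finset.mem_insert_of_mem (Finset.mem_singleton_self _)
  · intro i j h
    have h' : sP n (g i) = sP n (g j) := h
    rcases zmod2_cases i with rfl | rfl <;> rcases zmod2_cases j with rfl | rfl
    · rfl
    · rw [hg0, hg1] at h'; exact absurd h' hane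
    · rw [hg1, hg0] at h'; exact absurd h'.symm hane
    · rfl
  · intro i
    rcases zmod2_cases i with rfl | rfl
    · rw [show ((0 : ZMod 2) + 1) = 1 by decide, hg0, hg1]; rfl
    · rw [show ((1 : ZMod 2) + 1) = 0 by decide, hg1, hg0]; rfl

lemma adj_constraints (hn : 3 ≤ n) {σ : Finset (ZMod n ⊕ ZMod n)}
    (hσ : σ ∈ Dlf (sP n) (tP n)) {a b : ZMod n}
    (ha : inl a ∈ σ) (hb : inr b ∈ σ) : a ≠ b ∧ a ≠ b + 1 ∧ a + 1 ≠ b := by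
  obtain ⟨hs, ht, hc⟩ := hσ
  refine ⟨?_, ?_, ?_⟩
  · rintro rfl
    exact hc 2 {inl a, inr a}
      (Finset.insert_subset ha (Finset.singleton_subset_iff.mpr hb)) (two_cycle hn a)
  · intro h
    exact hs _ ha _ hb (by simp) (by simpa using h)
  · intro h
    exact ht _ ha _ hb (by simp) (by simpa using h)

/-- all-but-one candidate facets -/
def sigL (n : ℕ) [NeZero n] (j : ZMod n) : Finset (ZMod n ⊕ ZMod n) :=
  (Finset.univ.image (Sum.inl : ZMod n → ZMod n ⊕ ZMod n)).erase (Sum.inl j)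
def sigR (n : ℕ) [NeZero n] (j : ZMod n) : Finset (ZMod n ⊕ ZMod n) :=
  (Finset.univ.image (Sum.inr : ZMod n → ZMod n ⊕ ZMod n)).erase (Sum.inr j)

lemma mem_sigL [NeZero n] {j : ZMod n} {e : ZMod n ⊕ ZMod n} :
    e ∈ sigL n j ↔ ∃ a, a ≠ j ∧ e = inl a := by
  unfold sigL
  rw [Finset.mem_erase]
  constructor
  · rintro ⟨hne, hmem⟩
    obtain ⟨a, -, rfl⟩ := Finset.mem_image.mp hmem
    exact ⟨a, fun h => hne (by rw [h]), rfl⟩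
  · rintro ⟨a, haj, rfl⟩
    exact ⟨fun h => haj (Sum.inl_injective h), Finset.mem_image.mpr ⟨a, Finset.mem_univ a, rfl⟩⟩

lemma mem_sigR [NeZero n] {j : ZMod n} {e : ZMod n ⊕ ZMod n} :
    e ∈ sigR n j ↔ ∃ a, a ≠ j ∧ e = inr a := by
  unfold sigR
  rw [Finset.mem_erase]
  constructor
  · rintro ⟨hne, hmem⟩
    obtain ⟨a, -, rfl⟩ := Finset.mem_image.mp hmem
    exact ⟨a, fun h => hne (by rw [h]), rfl⟩
  · rintro ⟨a, haj, rfl⟩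
    exact ⟨fun h => haj (Sum.inr_injective h), Finset.mem_image.mpr ⟨a, Finset.mem_univ a, rfl⟩⟩

lemma card_image_inl [NeZero n] :
    (Finset.univ.image (Sum.inl : ZMod n → ZMod n ⊕ ZMod n)).card = n := by
  rw [Finset.card_image_of_injective _ Sum.inl_injective, Finset.card_univ, ZMod.card]

lemma card_image_inr [NeZero n] :
    (Finset.univ.image (Sum.inr : ZMod n → ZMod n ⊕ ZMod n)).card = n := by
  rw [Finset.card_image_of_injective _ Sum.inr_injective, Finset.card_univ, ZMod.card]

lemma card_sigL [NeZero n] (j : ZMod n) : (sigL n j).card = n - 1 := by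
  unfold sigL
  rw [Finset.card_erase_of_mem (by simp), card_image_inl]

lemma card_sigR [NeZero n] (j : ZMod n) : (sigR n j).card = n - 1 := by
  unfold sigR
  rw [Finset.card_erase_of_mem (by simp), card_image_inr]

lemma sigL_mem_Dlf [NeZero n] (hn : 3 ≤ n) (j : ZMod n) : sigL n j ∈ Dlf (sP n) (tP n) := by
  refine ⟨?_, ?_, ?_⟩
  · intro e he f hf hef
    obtain ⟨a, -, rfl⟩ := mem_sigL.mp he
    obtain ⟨b, -, rfl⟩ := mem_sigL.mp hf
    simpa using fun h => hef (by rw [h])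
  · intro e he f hf hef
    obtain ⟨a, -, rfl⟩ := mem_sigL.mp he
    obtain ⟨b, -, rfl⟩ := mem_sigL.mp hf
    simp only [tP_inl]
    intro h
    exact hef (congrArg inl (add_right_cancel h))
  · intro m τ hτ hcyc
    have := inl_cycle_full (fun e he => by
      obtain ⟨a, -, rfl⟩ := mem_sigL.mp (hτ he); exact ⟨a, rfl⟩) hcyc j
    obtain ⟨a, haj, hae⟩ := mem_sigL.mp (hτ this)
    exact haj (Sum.inl_injective hae).symm

lemma sigR_mem_Dlf [NeZero n] (hn : 3 ≤ n) (j : ZMod n) : sigR n j ∈ Dlf (sP n) (tP n) := by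
  refine ⟨?_, ?_, ?_⟩
  · intro e he f hf hef
    obtain ⟨a, -, rfl⟩ := mem_sigR.mp he
    obtain ⟨b, -, rfl⟩ := mem_sigR.mp hf
    simp only [sP_inr]
    intro h
    exact hef (congrArg inr (add_right_cancel h))
  · intro e he f hf hef
    obtain ⟨a, -, rfl⟩ := mem_sigR.mp he
    obtain ⟨b, -, rfl⟩ := mem_sigR.mp hf
    simpa using fun h => hef (by rw [h])
  · intro m τ hτ hcyc
    have := inr_cycle_full (fun e he => by
      obtain ⟨a, -, rfl⟩ := mem_sigR.mp (hτ he); exact ⟨a, rfl⟩) hcyc j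
    obtain ⟨a, haj, hae⟩ := mem_sigR.mp (hτ this)
    exact haj (Sum.inr_injective hae).symm

lemma full_cycle_inl [NeZero n] :
    IsDirCycle (sP n) (tP n) n (Finset.univ.image (Sum.inl : ZMod n → ZMod n ⊕ ZMod n)) := by
  refine ⟨Nat.pos_of_ne_zero (NeZero.ne n), Sum.inl, Sum.inl_injective, ?_, ?_, fun i => rfl⟩
  · intro e
    cases e <;> simp
  · intro i j h
    simpa using h

lemma full_cycle_inr [NeZero n] :
    IsDirCycle (sP n) (tP n) n (Finset.univ.image (Sum.inr : ZMod n → ZMod n ⊕ ZMod n)) := by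
  refine ⟨Nat.pos_of_ne_zero (NeZero.ne n), fun i => Sum.inr (-i), ?_, ?_, ?_, ?_⟩
  · intro i j h
    have h' : Sum.inr (α := ZMod n) (-i) = Sum.inr (-j) := h
    exact neg_inj.mp (Sum.inr_injective h')
  · intro e
    cases e with
    | inl a => simp
    | inr b =>
      constructor
      · intro _; exact ⟨-b, by simp⟩
      · intro _; exact Finset.mem_image.mpr ⟨b, Finset.mem_univ b, rfl⟩
  · intro i j h
    have h' : (-i : ZMod n) + 1 = -j + 1 := h
    exact neg_inj.mp (add_right_cancel h')
  · intro i
    show (-i : ZMod n) = -(i+1) + 1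
    ring

lemma exists_min_icc {lo hi : ℕ} {P : ℕ → Prop} [DecidablePred P]
    (hne : ((Finset.Icc lo hi).filter P).Nonempty) :
    ∃ k, lo ≤ k ∧ k ≤ hi ∧ P k ∧ ∀ j, lo ≤ j → j < k → ¬ P j := by
  have hmem := Finset.min'_mem _ hne
  rw [Finset.mem_filter, Finset.mem_Icc] at hmem
  refine ⟨_, hmem.1.1, hmem.1.2, hmem.2, ?_⟩
  intro j hj1 hjk hPj
  have hjmem : j ∈ (Finset.Icc lo hi).filter P := by
    rw [Finset.mem_filter, Finset.mem_Icc]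
    exact ⟨⟨hj1, le_trans (le_of_lt hjk) hmem.1.2⟩, hPj⟩
  exact absurd (Finset.min'_le _ j hjmem) (by omega)

lemma mixed_impossible [NeZero n] (hn : 3 ≤ n) (A B : Finset (ZMod n))
    (hA : A.Nonempty) (hB : B.Nonempty) (hcard : A.card + B.card = n - 1)
    (hadj : ∀ a ∈ A, ∀ b ∈ B, a ≠ b ∧ a ≠ b + 1 ∧ a + 1 ≠ b) : False := by
  obtain ⟨b0, hb0⟩ := hB
  have hAB : ∀ a ∈ A, a ∉ B := fun a ha hab => (hadj a ha a hab).1 rfl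
  have hAsub : A ⊆ Finset.univ \ B := fun a ha =>
    Finset.mem_sdiff.mpr ⟨Finset.mem_univ a, hAB a ha⟩
  have hBle : B.card ≤ n := by
    have h := Finset.card_le_univ B
    rwa [ZMod.card] at h
  have hcBc : (Finset.univ \ B).card = n - B.card := by
    rw [Finset.card_sdiff_of_subset (Finset.subset_univ B), Finset.card_univ, ZMod.card]
  have hC : ((Finset.univ \ B) \ A).card = 1 := by
    rw [Finset.card_sdiff_of_subset hAsub, hcBc]
    omega
  obtain ⟨x, hx⟩ := Finset.card_eq_one.mp hC
  have hmemx : ∀ y : ZMod n, y ∉ B → y ∉ A → y = x := by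
    intro y hyB hyA
    have hy : y ∈ (Finset.univ \ B) \ A := by simp [hyB, hyA]
    rw [hx] at hy
    exact Finset.mem_singleton.mp hy
  have hSne : ((Finset.Icc 1 (n-1)).filter (fun k : ℕ => b0 + (k : ZMod n) ∈ A)).Nonempty := by
    obtain ⟨a, ha⟩ := hA
    have hne : a - b0 ≠ 0 := sub_ne_zero.mpr (fun h => hAB a ha (h ▸ hb0))
    refine ⟨(a - b0).val, ?_⟩
    rw [Finset.mem_filter, Finset.mem_Icc]
    have h1 : (a - b0).val ≠ 0 := fun h => hne ((ZMod.val_eq_zero _).mp h)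
    have h2 : (a - b0).val < n := ZMod.val_lt _
    refine ⟨⟨by omega, by omega⟩, ?_⟩
    rw [ZMod.natCast_zmod_val]
    simpa using ha
  obtain ⟨k, hk1, hkn, hkA, hkmin⟩ := exists_min_icc hSne
  have hTne : ((Finset.Icc 1 (n-1)).filter (fun k : ℕ => b0 - (k : ZMod n) ∈ A)).Nonempty := by
    obtain ⟨a, ha⟩ := hA
    have hne : b0 - a ≠ 0 := sub_ne_zero.mpr (fun h => hAB a ha (by rw [← h]; exact hb0))
    refine ⟨(b0 - a).val, ?_⟩
    rw [Finset.mem_filter, Finset.mem_Icc]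
    have h1 : (b0 - a).val ≠ 0 := fun h => hne ((ZMod.val_eq_zero _).mp h)
    have h2 : (b0 - a).val < n := ZMod.val_lt _
    refine ⟨⟨by omega, by omega⟩, ?_⟩
    rw [ZMod.natCast_zmod_val]
    simpa using ha
  obtain ⟨k', hk'1, hk'n, hk'A, hk'min⟩ := exists_min_icc hTne
  have hk2 : 2 ≤ k := by
    by_contra h
    have hke : k = 1 := by omega
    rw [hke] at hkA
    exact (hadj _ hkA b0 hb0).2.1 (by push_cast; ring)
  have hk'2 : 2 ≤ k' := by
    by_contra h
    have hke : k' = 1 := by omega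
    rw [hke] at hk'A
    exact (hadj _ hk'A b0 hb0).2.2 (by push_cast; ring)
  have hbx : b0 + ((k - 1 : ℕ) : ZMod n) = x := by
    apply hmemx
    · intro hmem
      refine (hadj _ hkA _ hmem).2.1 ?_
      have hcast : ((k : ℕ) : ZMod n) = ((k - 1 : ℕ) : ZMod n) + 1 := by
        have : (k : ℕ) = (k - 1) + 1 := by omega
        conv_lhs => rw [this]
        push_cast
        ring
      rw [hcast]; ring
    · exact hkmin (k-1) (by omega) (by omega)
  have hbx' : b0 - ((k' - 1 : ℕ) : ZMod n) = x := by
    apply hmemx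
    · intro hmem
      refine (hadj _ hk'A _ hmem).2.2 ?_
      have hcast : ((k' : ℕ) : ZMod n) = ((k' - 1 : ℕ) : ZMod n) + 1 := by
        have : (k' : ℕ) = (k' - 1) + 1 := by omega
        conv_lhs => rw [this]
        push_cast
        ring
      rw [hcast]; ring
    · exact hk'min (k'-1) (by omega) (by omega)
  have heq : ((k-1 : ℕ) : ZMod n) + ((k'-1 : ℕ) : ZMod n) = 0 := by
    have h := hbx.trans hbx'.symm
    linear_combination h
  have hdvd : n ∣ (k - 1) + (k' - 1) := by
    rwa [← Nat.cast_add, ZMod.natCast_eq_zero_iff] at heq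
  have hdn : (k - 1) + (k' - 1) = n :=
    Nat.eq_of_dvd_of_lt_two_mul (by omega) hdvd (by omega)
  obtain ⟨a, ha⟩ := hA
  have hja : a = b0 + (((a - b0).val : ℕ) : ZMod n) := by
    rw [ZMod.natCast_zmod_val]; ring
  have hjlt : (a - b0).val < n := ZMod.val_lt _
  have hj0 : (a - b0).val ≠ 0 := by
    intro h
    have h' : a - b0 = 0 := (ZMod.val_eq_zero _).mp h
    exact hAB a ha (by rw [sub_eq_zero.mp h']; exact hb0)
  rcases Nat.lt_or_ge ((a - b0).val) k with h | h
  · exact hkmin _ (by omega) h (by rw [← hja]; exact ha)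
  · have hrep : a = b0 - (((n - (a - b0).val : ℕ) : ZMod n)) := by
      have hzero : (((a - b0).val : ℕ) : ZMod n) + ((n - (a - b0).val : ℕ) : ZMod n) = 0 := by
        rw [← Nat.cast_add, show (a - b0).val + (n - (a - b0).val) = n by omega,
          ZMod.natCast_self]
      linear_combination hja + hzero
    exact hk'min (n - (a - b0).val) (by omega) (by omega) (by rw [← hrep]; exact ha)


lemma sigL_facet [NeZero n] (hn : 3 ≤ n) (j : ZMod n) :
    IsFacetOf (Dlf (sP n) (tP n)) (sigL n j) := by
  refine ⟨sigL_mem_Dlf hn j, fun τ hτ hsub => ?_⟩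
  refine Finset.Subset.antisymm hsub fun e he => ?_
  cases e with
  | inr b =>
    exfalso
    have hmem : ∀ a : ZMod n, a ≠ j → inl a ∈ τ := fun a haj =>
      hsub (mem_sigL.mpr ⟨a, haj, rfl⟩)
    have h1 : b = j := by
      by_contra hbj
      exact (adj_constraints hn hτ (hmem b hbj) he).1 rfl
    have h2 : b + 1 = j := by
      by_contra hbj
      exact (adj_constraints hn hτ (hmem (b + 1) hbj) he).2.1 rfl
    exact one_ne_zero' hn (add_eq_left.mp (h2.trans h1.symm))
  | inl a =>
    rcases eq_or_ne a j with rfl | haj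
    · exfalso
      have hall : Finset.univ.image (Sum.inl : ZMod n → ZMod n ⊕ ZMod n) ⊆ τ := by
        intro e he'
        obtain ⟨b, -, rfl⟩ := Finset.mem_image.mp he'
        rcases eq_or_ne b a with rfl | hba
        · exact he
        · exact hsub (mem_sigL.mpr ⟨b, hba, rfl⟩)
      exact hτ.2.2 n _ hall full_cycle_inl
    · exact mem_sigL.mpr ⟨a, haj, rfl⟩

lemma sigR_facet [NeZero n] (hn : 3 ≤ n) (j : ZMod n) :
    IsFacetOf (Dlf (sP n) (tP n)) (sigR n j) := by
  refine ⟨sigR_mem_Dlf hn j, fun τ hτ hsub => ?_⟩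
  refine Finset.Subset.antisymm hsub fun e he => ?_
  cases e with
  | inl a =>
    exfalso
    have hmem : ∀ b : ZMod n, b ≠ j → inr b ∈ τ := fun b hbj =>
      hsub (mem_sigR.mpr ⟨b, hbj, rfl⟩)
    have h1 : a = j := by
      by_contra haj
      exact (adj_constraints hn hτ he (hmem a haj)).1 rfl
    have h2 : a - 1 = j := by
      by_contra haj
      exact (adj_constraints hn hτ he (hmem (a - 1) haj)).2.1 (by ring)
    have h10 : (1 : ZMod n) = 0 := by linear_combination h1 - h2
    exact one_ne_zero' hn h10
  | inr b =>
    rcases eq_or_ne b j with rfl | hbj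
    · exfalso
      have hall : Finset.univ.image (Sum.inr : ZMod n → ZMod n ⊕ ZMod n) ⊆ τ := by
        intro e he'
        obtain ⟨a, -, rfl⟩ := Finset.mem_image.mp he'
        rcases eq_or_ne a b with rfl | hab
        · exact he
        · exact hsub (mem_sigR.mpr ⟨a, hab, rfl⟩)
      exact hτ.2.2 n _ hall full_cycle_inr
    · exact mem_sigR.mpr ⟨b, hbj, rfl⟩

lemma three_distinct [NeZero n] (hn : 3 ≤ n) (b : ZMod n) :
    ({b - 1, b, b + 1} : Finset (ZMod n)).card = 3 := by
  rw [Finset.card_insert_of_notMem, Finset.card_insert_of_notMem, Finset.card_singleton]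
  · simp only [Finset.mem_singleton]
    intro h
    exact one_ne_zero' hn (left_eq_add.mp h)
  · simp only [Finset.mem_insert, Finset.mem_singleton]
    rintro (h | h)
    · exact one_ne_zero' hn (by linear_combination - h)
    · exact two_ne_zero' hn (by linear_combination - h)

lemma no_inr_of_many_inl [NeZero n] (hn : 3 ≤ n) {σ : Finset (ZMod n ⊕ ZMod n)}
    (hσ : σ ∈ Dlf (sP n) (tP n)) (A : Finset (ZMod n)) (hA : ∀ a ∈ A, inl a ∈ σ)
    (hcard : n - 2 ≤ A.card) {b : ZMod n} (hb : inr b ∈ σ) : False := by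
  have h3 : ({b - 1, b, b + 1} : Finset (ZMod n)) ⊆ Finset.univ \ A := by
    intro y hy
    simp only [Finset.mem_insert, Finset.mem_singleton] at hy
    refine Finset.mem_sdiff.mpr ⟨Finset.mem_univ y, fun hyA => ?_⟩
    obtain ⟨h1, h2, h3'⟩ := adj_constraints hn hσ (hA y hyA) hb
    rcases hy with rfl | rfl | rfl
    · exact h3' (by ring)
    · exact h1 rfl
    · exact h2 rfl
  have hle := Finset.card_le_card h3
  rw [three_distinct hn b, Finset.card_sdiff_of_subset (Finset.subset_univ A), Finset.card_univ,
    ZMod.card] at hle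
  have hAle : A.card ≤ n := by
    have h := Finset.card_le_univ A
    rwa [ZMod.card] at h
  omega

lemma no_inl_of_many_inr [NeZero n] (hn : 3 ≤ n) {σ : Finset (ZMod n ⊕ ZMod n)}
    (hσ : σ ∈ Dlf (sP n) (tP n)) (B : Finset (ZMod n)) (hB : ∀ b ∈ B, inr b ∈ σ)
    (hcard : n - 2 ≤ B.card) {a : ZMod n} (ha : inl a ∈ σ) : False := by
  have h3 : ({a - 1, a, a + 1} : Finset (ZMod n)) ⊆ Finset.univ \ B := by
    intro y hy
    simp only [Finset.mem_insert, Finset.mem_singleton] at hy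
    refine Finset.mem_sdiff.mpr ⟨Finset.mem_univ y, fun hyB => ?_⟩
    obtain ⟨h1, h2, h3'⟩ := adj_constraints hn hσ ha (hB y hyB)
    rcases hy with rfl | rfl | rfl
    · exact h2 (by ring)
    · exact h1 rfl
    · exact h3' rfl
  have hle := Finset.card_le_card h3
  rw [three_distinct hn a, Finset.card_sdiff_of_subset (Finset.subset_univ B), Finset.card_univ,
    ZMod.card] at hle
  have hBle : B.card ≤ n := by
    have h := Finset.card_le_univ B
    rwa [ZMod.card] at h
  omega

lemma facet_all_inl [NeZero n] (hn : 3 ≤ n) {σ : Finset (ZMod n ⊕ ZMod n)}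
    (hfac : IsFacetOf (Dlf (sP n) (tP n)) σ) (hall : ∀ e ∈ σ, ∃ a, e = inl a) :
    ∃ j, σ = sigL n j := by
  have hmiss : ∃ j, inl j ∉ σ := by
    by_contra h
    push_neg at h
    have hsub : Finset.univ.image (Sum.inl : ZMod n → ZMod n ⊕ ZMod n) ⊆ σ := by
      intro e he
      obtain ⟨b, -, rfl⟩ := Finset.mem_image.mp he
      exact h b
    exact hfac.1.2.2 n _ hsub full_cycle_inl
  obtain ⟨j, hj⟩ := hmiss
  have hsub : σ ⊆ sigL n j := by
    intro e he
    obtain ⟨a, rfl⟩ := hall e he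
    exact mem_sigL.mpr ⟨a, fun h => hj (h ▸ he), rfl⟩
  exact ⟨j, hfac.2 _ (sigL_mem_Dlf hn j) hsub⟩

lemma facet_all_inr [NeZero n] (hn : 3 ≤ n) {σ : Finset (ZMod n ⊕ ZMod n)}
    (hfac : IsFacetOf (Dlf (sP n) (tP n)) σ) (hall : ∀ e ∈ σ, ∃ a, e = inr a) :
    ∃ j, σ = sigR n j := by
  have hmiss : ∃ j, inr j ∉ σ := by
    by_contra h
    push_neg at h
    have hsub : Finset.univ.image (Sum.inr : ZMod n → ZMod n ⊕ ZMod n) ⊆ σ := by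
      intro e he
      obtain ⟨b, -, rfl⟩ := Finset.mem_image.mp he
      exact h b
    exact hfac.1.2.2 n _ hsub full_cycle_inr
  obtain ⟨j, hj⟩ := hmiss
  have hsub : σ ⊆ sigR n j := by
    intro e he
    obtain ⟨a, rfl⟩ := hall e he
    exact mem_sigR.mpr ⟨a, fun h => hj (h ▸ he), rfl⟩
  exact ⟨j, hfac.2 _ (sigR_mem_Dlf hn j) hsub⟩

lemma classify [NeZero n] (hn : 3 ≤ n) {σ : Finset (ZMod n ⊕ ZMod n)}
    (hσ : σ ∈ Dlf (sP n) (tP n)) (hc : σ.card = n - 1) :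
    ∃ j, σ = sigL n j ∨ σ = sigR n j := by
  classical
  set A := Finset.univ.filter (fun a : ZMod n => inl a ∈ σ) with hAdef
  set B := Finset.univ.filter (fun a : ZMod n => inr a ∈ σ) with hBdef
  have hmemA : ∀ a : ZMod n, a ∈ A ↔ inl a ∈ σ := fun a => by
    rw [hAdef, Finset.mem_filter]
    simp
  have hmemB : ∀ a : ZMod n, a ∈ B ↔ inr a ∈ σ := fun a => by
    rw [hBdef, Finset.mem_filter]
    simp
  have hdecomp : σ = A.image inl ∪ B.image inr := by
    ext e
    constructor
    · intro he
      cases e with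
      | inl a => exact Finset.mem_union_left _ (Finset.mem_image.mpr ⟨a, (hmemA a).mpr he, rfl⟩)
      | inr b => exact Finset.mem_union_right _ (Finset.mem_image.mpr ⟨b, (hmemB b).mpr he, rfl⟩)
    · intro he
      rcases Finset.mem_union.mp he with h | h
      · obtain ⟨a, ha, rfl⟩ := Finset.mem_image.mp h
        exact (hmemA a).mp ha
      · obtain ⟨b, hb, rfl⟩ := Finset.mem_image.mp h
        exact (hmemB b).mp hb
  have hdisj : Disjoint (A.image (Sum.inl : ZMod n → ZMod n ⊕ ZMod n)) (B.image Sum.inr) := by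
    rw [Finset.disjoint_left]
    rintro e he hf
    obtain ⟨a, -, rfl⟩ := Finset.mem_image.mp he
    obtain ⟨b, -, hb⟩ := Finset.mem_image.mp hf
    exact Sum.inr_ne_inl hb
  have hcardAB : A.card + B.card = n - 1 := by
    have hcc := congrArg Finset.card hdecomp
    rw [Finset.card_union_of_disjoint hdisj,
      Finset.card_image_of_injective _ Sum.inl_injective,
      Finset.card_image_of_injective _ Sum.inr_injective, hc] at hcc
    omega
  rcases A.eq_empty_or_nonempty with hAe | hAne
  · rcases B.eq_empty_or_nonempty with hBe | hBne
    · exfalso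
      rw [hAe, hBe, Finset.card_empty] at hcardAB
      omega
    · have hcompl : (Finset.univ \ B).card = 1 := by
        rw [Finset.card_sdiff_of_subset (Finset.subset_univ _), Finset.card_univ, ZMod.card]
        rw [hAe, Finset.card_empty] at hcardAB
        have hBle : B.card ≤ n := by
          have h := Finset.card_le_univ B
          rwa [ZMod.card] at h
        omega
      obtain ⟨j, hj⟩ := Finset.card_eq_one.mp hcompl
      have hjB : j ∉ B := by
        have hjm : j ∈ Finset.univ \ B := hj ▸ Finset.mem_singleton_self j
        exact (Finset.mem_sdiff.mp hjm).2
      have hBmem : ∀ b : ZMod n, b ∈ B ↔ b ≠ j := by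
        intro b
        constructor
        · rintro hb rfl
          exact hjB hb
        · intro hbj
          by_contra hbB
          have hbmem : b ∈ Finset.univ \ B := Finset.mem_sdiff.mpr ⟨Finset.mem_univ b, hbB⟩
          rw [hj] at hbmem
          exact hbj (Finset.mem_singleton.mp hbmem)
      refine ⟨j, Or.inr ?_⟩
      ext e
      rw [mem_sigR]
      cases e with
      | inl a =>
        constructor
        · intro h
          have haA : a ∈ A := (hmemA a).mpr h
          rw [hAe] at haA
          exact absurd haA (Finset.notMem_empty a)
        · rintro ⟨b, -, hb⟩
          exact absurd hb (by simp)
      | inr b =>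
        constructor
        · intro h
          exact ⟨b, (hBmem b).mp ((hmemB b).mpr h), rfl⟩
        · rintro ⟨a, haj, hab⟩
          obtain rfl := Sum.inr_injective hab
          exact (hmemB b).mp ((hBmem b).mpr haj)
  · rcases B.eq_empty_or_nonempty with hBe | hBne
    · have hcompl : (Finset.univ \ A).card = 1 := by
        rw [Finset.card_sdiff_of_subset (Finset.subset_univ _), Finset.card_univ, ZMod.card]
        rw [hBe, Finset.card_empty] at hcardAB
        have hAle : A.card ≤ n := by
          have h := Finset.card_le_univ A
          rwa [ZMod.card] at h
        omega
      obtain ⟨j, hj⟩ := Finset.card_eq_one.mp hcompl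
      have hjA : j ∉ A := by
        have hjm : j ∈ Finset.univ \ A := hj ▸ Finset.mem_singleton_self j
        exact (Finset.mem_sdiff.mp hjm).2
      have hAmem : ∀ a : ZMod n, a ∈ A ↔ a ≠ j := by
        intro a
        constructor
        · rintro ha rfl
          exact hjA ha
        · intro haj
          by_contra haA
          have hamem : a ∈ Finset.univ \ A := Finset.mem_sdiff.mpr ⟨Finset.mem_univ a, haA⟩
          rw [hj] at hamem
          exact haj (Finset.mem_singleton.mp hamem)
      refine ⟨j, Or.inl ?_⟩
      ext e
      rw [mem_sigL]
      cases e with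
      | inr b =>
        constructor
        · intro h
          have hbB : b ∈ B := (hmemB b).mpr h
          rw [hBe] at hbB
          exact absurd hbB (Finset.notMem_empty b)
        · rintro ⟨a, -, hb⟩
          exact absurd hb (by simp)
      | inl a =>
        constructor
        · intro h
          exact ⟨a, (hAmem a).mp ((hmemA a).mpr h), rfl⟩
        · rintro ⟨a', haj, hab⟩
          obtain rfl := Sum.inl_injective hab
          exact (hmemA a).mp ((hAmem a).mpr haj)
    · exfalso
      refine mixed_impossible hn A B hAne hBne hcardAB fun a ha b hb => ?_
      exact adj_constraints hn hσ ((hmemA a).mp ha) ((hmemB b).mp hb)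


lemma skel_facet_iff [NeZero n] (hn : 3 ≤ n) (σ : Finset (ZMod n ⊕ ZMod n)) :
    IsFacetOf (pureSkel (Dlf (sP n) (tP n)) (n - 2)) σ ↔
      ∃ j, σ = sigL n j ∨ σ = sigR n j := by
  constructor
  · rintro ⟨⟨ρ, hρ, hρc, hσρ⟩, hmax⟩
    have hρskel : ρ ∈ pureSkel (Dlf (sP n) (tP n)) (n - 2) :=
      ⟨ρ, hρ, hρc, Finset.Subset.refl ρ⟩
    obtain rfl := hmax ρ hρskel hσρ
    exact classify hn hρ (by omega)
  · rintro ⟨j, rfl | rfl⟩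
    · refine ⟨⟨sigL n j, sigL_mem_Dlf hn j, by rw [card_sigL]; omega, Finset.Subset.refl _⟩, ?_⟩
      rintro τ ⟨ρ, hρ, hρc, hτρ⟩ hsub
      refine Finset.eq_of_subset_of_card_le hsub ?_
      calc τ.card ≤ ρ.card := Finset.card_le_card hτρ
        _ ≤ (sigL n j).card := by rw [card_sigL]; omega
    · refine ⟨⟨sigR n j, sigR_mem_Dlf hn j, by rw [card_sigR]; omega, Finset.Subset.refl _⟩, ?_⟩
      rintro τ ⟨ρ, hρ, hρc, hτρ⟩ hsub
      refine Finset.eq_of_subset_of_card_le hsub ?_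
      calc τ.card ≤ ρ.card := Finset.card_le_card hτρ
        _ ≤ (sigR n j).card := by rw [card_sigR]; omega

lemma singleL_mem [NeZero n] (hn : 3 ≤ n) (a : ZMod n) :
    ({inl a} : Finset (ZMod n ⊕ ZMod n)) ∈ pureSkel (Dlf (sP n) (tP n)) (n - 2) := by
  refine ⟨sigL n (a + 1), sigL_mem_Dlf hn (a + 1), by rw [card_sigL]; omega, ?_⟩
  rw [Finset.singleton_subset_iff]
  exact mem_sigL.mpr ⟨a, fun h => one_ne_zero' hn (left_eq_add.mp h), rfl⟩

lemma singleR_mem [NeZero n] (hn : 3 ≤ n) (a : ZMod n) :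
    ({inr a} : Finset (ZMod n ⊕ ZMod n)) ∈ pureSkel (Dlf (sP n) (tP n)) (n - 2) := by
  refine ⟨sigR n (a + 1), sigR_mem_Dlf hn (a + 1), by rw [card_sigR]; omega, ?_⟩
  rw [Finset.singleton_subset_iff]
  exact mem_sigR.mpr ⟨a, fun h => one_ne_zero' hn (left_eq_add.mp h), rfl⟩

lemma pair_mem_types [NeZero n] (hn : 3 ≤ n) {x y : ZMod n ⊕ ZMod n}
    (hxy : ({x, y} : Finset (ZMod n ⊕ ZMod n)) ∈ pureSkel (Dlf (sP n) (tP n)) (n - 2)) :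
    ((∃ a, x = inl a) ∧ (∃ a, y = inl a)) ∨ ((∃ a, x = inr a) ∧ (∃ a, y = inr a)) := by
  obtain ⟨ρ, hρ, hρc, hsub⟩ := hxy
  have hx : x ∈ ρ := hsub (Finset.mem_insert_self _ _)
  have hy : y ∈ ρ := hsub (Finset.mem_insert_of_mem (Finset.mem_singleton_self _))
  obtain ⟨j, rfl | rfl⟩ := classify hn hρ (by omega)
  · left
    constructor
    · obtain ⟨a, -, h⟩ := mem_sigL.mp hx
      exact ⟨a, h⟩
    · obtain ⟨a, -, h⟩ := mem_sigL.mp hy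
      exact ⟨a, h⟩
  · right
    constructor
    · obtain ⟨a, -, h⟩ := mem_sigR.mp hx
      exact ⟨a, h⟩
    · obtain ⟨a, -, h⟩ := mem_sigR.mp hy
      exact ⟨a, h⟩

lemma no_path [NeZero n] (hn : 3 ≤ n) :
    ¬ Relation.ReflTransGen
      (fun a b => ({a, b} : Finset (ZMod n ⊕ ZMod n)) ∈ pureSkel (Dlf (sP n) (tP n)) (n - 2))
      (inl 0) (inr 0) := by
  intro h
  have key : ∀ y : ZMod n ⊕ ZMod n, Relation.ReflTransGen
      (fun a b => ({a, b} : Finset (ZMod n ⊕ ZMod n)) ∈ pureSkel (Dlf (sP n) (tP n)) (n - 2))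
      (inl 0) y → ∃ a, y = inl a := by
    intro y hy
    induction hy with
    | refl => exact ⟨0, rfl⟩
    | tail hab hbc ih =>
      obtain ⟨a, rfl⟩ := ih
      rcases pair_mem_types hn hbc with ⟨-, h2⟩ | ⟨⟨a', ha'⟩, -⟩
      · exact h2
      · exact absurd ha' (by simp)
  obtain ⟨a, ha⟩ := key _ h
  exact absurd ha (by simp)

lemma not_conn [NeZero n] (hn : 3 ≤ n) :
    ¬ ComplexConnected (pureSkel (Dlf (sP n) (tP n)) (n - 2)) := by
  intro h
  exact no_path hn (h (inl 0) (inr 0) (singleL_mem hn 0) (singleR_mem hn 0))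

lemma image_fin1 {α : Type} [DecidableEq α] (g : Fin 1 → α) :
    Finset.univ.image g = {g 0} := by
  ext e
  simp only [Finset.mem_image, Finset.mem_univ, true_and, Finset.mem_singleton]
  constructor
  · rintro ⟨i, rfl⟩
    exact congrArg g (Subsingleton.elim i 0)
  · rintro rfl
    exact ⟨0, rfl⟩

lemma image_fin2 {α : Type} [DecidableEq α] (x y : α) :
    Finset.univ.image ![x, y] = {x, y} := by
  ext e
  simp only [Finset.mem_image, Finset.mem_univ, true_and, Finset.mem_insert,
    Finset.mem_singleton]
  constructor
  · rintro ⟨i, rfl⟩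
    fin_cases i
    · left; rfl
    · right; rfl
  · rintro (rfl | rfl)
    · exact ⟨0, rfl⟩
    · exact ⟨1, rfl⟩

lemma insertNth_zero' {α : Type} (v : α) (g : Fin 1 → α) :
    Fin.insertNth (0 : Fin 2) v g = ![v, g 0] := by
  rw [Fin.insertNth_zero']
  funext i
  refine Fin.cases rfl (fun j => ?_) i
  rw [Fin.cons_succ, Matrix.cons_val_succ, Subsingleton.elim j 0, Matrix.cons_val_zero]

lemma insertNth_one' {α : Type} (v : α) (g : Fin 1 → α) :
    Fin.insertNth (1 : Fin 2) v g = ![g 0, v] := by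
  rw [show (1 : Fin 2) = Fin.last 1 from rfl, Fin.insertNth_last']
  funext i
  refine Fin.lastCases ?_ (fun j => ?_) i
  · rw [Fin.snoc_last, show Fin.last 1 = (1 : Fin 2) from rfl, Matrix.cons_val_one,
      Matrix.cons_val_zero]
  · rw [Fin.snoc_castSucc, Subsingleton.elim j 0,
      show Fin.castSucc (0 : Fin 1) = (0 : Fin 2) from rfl, Matrix.cons_val_zero]

lemma connected_of_H0 {α K : Type} [Fintype α] [DecidableEq α] [Field K]
    (Δ : Set (Finset α)) (v0 v1 : α) (h01 : v0 ≠ v1)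
    (h0 : ({v0} : Finset α) ∈ Δ) (h1 : ({v1} : Finset α) ∈ Δ)
    (hrh : RHomZero α K Δ 0) :
    Relation.ReflTransGen (fun a b => ({a, b} : Finset α) ∈ Δ) v0 v1 := by
  classical
  by_contra hcon
  have hbij : Function.Bijective (fun (u : α) => (fun _ => u : Fin 1 → α)) :=
    ⟨fun u v h => congrFun h 0,
     fun g => ⟨g 0, funext fun i => congrArg g (Subsingleton.elim 0 i)⟩⟩
  have hval : validChain Δ
      (fun g : Fin 1 → α => if g 0 = v0 then (1 : K) else if g 0 = v1 then -1 else 0) := by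
    intro g hg
    rw [image_fin1 g]
    by_cases hx : g 0 = v0
    · rw [hx]; exact h0
    · by_cases hy : g 0 = v1
      · rw [hy]; exact h1
      · exfalso
        apply hg
        simp only [if_neg hx, if_neg hy]
  have hsum : (∑ g : Fin 1 → α,
      (if g 0 = v0 then (1 : K) else if g 0 = v1 then -1 else 0)) = 0 := by
    rw [← Fintype.sum_bijective _ hbij
      (fun u => if u = v0 then (1 : K) else if u = v1 then -1 else 0)
      (fun g => if g 0 = v0 then (1 : K) else if g 0 = v1 then -1 else 0)
      (fun u => rfl)]
    have hsplit : ∀ u : α,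
        (if u = v0 then (1 : K) else if u = v1 then -1 else 0)
        = (if u = v0 then (1 : K) else 0) + (if u = v1 then (-1 : K) else 0) := by
      intro u
      by_cases hx : u = v0
      · subst hx
        rw [if_pos rfl, if_pos rfl, if_neg h01, add_zero]
      · rw [if_neg hx, if_neg hx, zero_add]
    rw [Finset.sum_congr rfl fun u _ => hsplit u, Finset.sum_add_distrib,
      Finset.sum_ite_eq' Finset.univ v0 (fun _ => (1 : K)),
      Finset.sum_ite_eq' Finset.univ v1 (fun _ => (-1 : K))]
    simp
  obtain ⟨bb, hbv, hbd⟩ := hrh _ hval hsum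
  set r : α → α → Prop := fun a b => ({a, b} : Finset α) ∈ Δ with hrdef
  set φ : α → K := fun u => if Relation.ReflTransGen r v0 u then 1 else 0 with hφdef
  have hφ0 : φ v0 = 1 := by
    simp only [hφdef]
    exact if_pos Relation.ReflTransGen.refl
  have hφ1 : φ v1 = 0 := by
    simp only [hφdef]
    exact if_neg hcon
  have hedge : ∀ x y : α, bb ![x, y] ≠ 0 → φ x = φ y := by
    intro x y hne
    have hface := hbv ![x, y] hne
    rw [image_fin2 x y] at hface
    have hrxy : r x y := hface
    have hryx : r y x := by
      simp only [hrdef]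
      rw [Finset.pair_comm y x]
      exact hface
    simp only [hφdef]
    by_cases hx : Relation.ReflTransGen r v0 x
    · rw [if_pos hx, if_pos (hx.tail hrxy)]
    · rw [if_neg hx, if_neg (fun hy => hx (hy.tail hryx))]
  have hbdry : ∀ g : Fin 1 → α, bdry bb g
      = (∑ v : α, bb ![v, g 0]) - (∑ v : α, bb ![g 0, v]) := by
    intro g
    simp only [bdry]
    rw [Fin.sum_univ_two,
      Finset.sum_congr rfl fun v _ => congrArg bb (insertNth_zero' v g),
      Finset.sum_congr rfl fun v _ => congrArg bb (insertNth_one' v g),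
      show (((0 : Fin 2) : ℕ)) = 0 from rfl, show (((1 : Fin 2) : ℕ)) = 1 from rfl,
      pow_zero, pow_one]
    ring
  have hzero : (∑ g : Fin 1 → α, φ (g 0) * bdry bb g) = 0 := by
    have hstep1 : ∀ g : Fin 1 → α, φ (g 0) * bdry bb g
        = φ (g 0) * ((∑ v : α, bb ![v, g 0]) - (∑ v : α, bb ![g 0, v])) :=
      fun g => by rw [hbdry g]
    rw [Finset.sum_congr rfl fun g _ => hstep1 g]
    rw [← Fintype.sum_bijective _ hbij
      (fun u => φ u * ((∑ v : α, bb ![v, u]) - (∑ v : α, bb ![u, v])))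
      (fun g => φ (g 0) * ((∑ v : α, bb ![v, g 0]) - (∑ v : α, bb ![g 0, v])))
      (fun u => rfl)]
    have hexp : ∀ u : α, φ u * ((∑ v : α, bb ![v, u]) - (∑ v : α, bb ![u, v]))
        = (∑ v : α, φ u * bb ![v, u]) - (∑ v : α, φ u * bb ![u, v]) := by
      intro u
      rw [mul_sub, Finset.mul_sum, Finset.mul_sum]
    rw [Finset.sum_congr rfl fun u _ => hexp u, Finset.sum_sub_distrib,
      Finset.sum_comm, ← Finset.sum_sub_distrib]
    refine Finset.sum_eq_zero fun x _ => ?_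
    rw [← Finset.sum_sub_distrib]
    refine Finset.sum_eq_zero fun y _ => ?_
    by_cases hb0 : bb ![x, y] = 0
    · rw [hb0, mul_zero, mul_zero, sub_zero]
    · rw [hedge x y hb0]
      exact sub_self _
  have hbdg : ∀ g : Fin 1 → α, bdry bb g
      = (if g 0 = v0 then (1 : K) else if g 0 = v1 then -1 else 0) :=
    fun g => congrFun hbd g
  have hone : (∑ g : Fin 1 → α, φ (g 0) * bdry bb g) = 1 := by
    have hstep2 : ∀ g : Fin 1 → α, φ (g 0) * bdry bb g
        = φ (g 0) * (if g 0 = v0 then (1 : K) else if g 0 = v1 then -1 else 0) :=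
      fun g => by rw [hbdg g]
    rw [Finset.sum_congr rfl fun g _ => hstep2 g]
    rw [← Fintype.sum_bijective _ hbij
      (fun u => φ u * (if u = v0 then (1 : K) else if u = v1 then -1 else 0))
      (fun g => φ (g 0) * (if g 0 = v0 then (1 : K) else if g 0 = v1 then -1 else 0))
      (fun u => rfl)]
    have hsplit2 : ∀ u : α,
        φ u * (if u = v0 then (1 : K) else if u = v1 then -1 else 0)
        = (if u = v0 then φ v0 else 0) + (if u = v1 then -φ v1 else 0) := by
      intro u
      by_cases hx : u = v0
      · subst hx
        rw [if_pos rfl, if_pos rfl, if_neg h01, mul_one, add_zero]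
      · rw [if_neg hx, if_neg hx, zero_add]
        by_cases hy : u = v1
        · subst hy
          rw [if_pos rfl, if_pos rfl]
          ring
        · rw [if_neg hy, if_neg hy, mul_zero]
    rw [Finset.sum_congr rfl fun u _ => hsplit2 u, Finset.sum_add_distrib,
      Finset.sum_ite_eq' Finset.univ v0 (fun _ => φ v0),
      Finset.sum_ite_eq' Finset.univ v1 (fun _ => -φ v1),
      if_pos (Finset.mem_univ v0), if_pos (Finset.mem_univ v1), hφ0, hφ1]
    ring
  rw [hzero] at hone
  exact zero_ne_one hone

lemma not_SCM [NeZero n] (hn : 3 ≤ n) (K : Type) [Field K] :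
    ¬ IsSCM (ZMod n ⊕ ZMod n) K (Dlf (sP n) (tP n)) := by
  intro hscm
  have hempty : (∅ : Finset (ZMod n ⊕ ZMod n)) ∈ pureSkel (Dlf (sP n) (tP n)) (n - 2) :=
    ⟨sigL n 0, sigL_mem_Dlf hn 0, by rw [card_sigL]; omega, Finset.empty_subset _⟩
  have hlink : linkFaceC (pureSkel (Dlf (sP n) (tP n)) (n - 2)) ∅
      = pureSkel (Dlf (sP n) (tP n)) (n - 2) := by
    ext τ
    simp [linkFaceC]
  have hrh : RHomZero (ZMod n ⊕ ZMod n) K (pureSkel (Dlf (sP n) (tP n)) (n - 2)) 0 := by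
    have h := hscm (n - 2) ∅ hempty 0
      ⟨sigL n 1, by
        rw [hlink]
        exact ⟨sigL n 1, sigL_mem_Dlf hn 1, by rw [card_sigL]; omega, Finset.Subset.refl _⟩,
        by rw [card_sigL]; omega⟩
    rwa [hlink] at h
  exact no_path hn
    (connected_of_H0 (K := K) (pureSkel (Dlf (sP n) (tP n)) (n - 2))
      (inl (0 : ZMod n) : ZMod n ⊕ ZMod n) (inr (0 : ZMod n)) (by simp)
      (singleL_mem hn 0) (singleR_mem hn 0) hrh)

lemma not_shellable [NeZero n] (hn : 3 ≤ n) : ¬ Shellable (Dlf (sP n) (tP n)) := by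
  rintro ⟨m, F, hFinj, hFfac, hshell⟩
  obtain ⟨iL, hiL⟩ := (hFfac (sigL n 0)).mp (sigL_facet hn 0)
  obtain ⟨iR, hiR⟩ := (hFfac (sigR n 0)).mp (sigR_facet hn 0)
  have hm : 0 < m := iL.pos
  have hFfacet : ∀ i : Fin m, IsFacetOf (Dlf (sP n) (tP n)) (F i) :=
    fun i => (hFfac (F i)).mpr ⟨i, rfl⟩
  have stepL : ∀ i : Fin m, 0 < (i : ℕ) → (∃ j, F i = sigL n j) →
      ∃ i' : Fin m, (i' : ℕ) < (i : ℕ) ∧ ∃ j', F i' = sigL n j' := by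
    rintro i hi ⟨j, hFi⟩
    obtain ⟨ρ, hρFi, ⟨i0, hi0lt, hρFi0⟩, hρcard, -⟩ :=
      hshell i hi ∅ (Finset.empty_subset _)
        ⟨⟨0, hm⟩, by simpa [Fin.lt_def] using hi, Finset.empty_subset _⟩
    have hρall : ∀ e ∈ ρ, ∃ a, e = inl a := by
      intro e he
      have hmem := hρFi he
      rw [hFi] at hmem
      obtain ⟨a, -, rfl⟩ := mem_sigL.mp hmem
      exact ⟨a, rfl⟩
    have hρc : ρ.card = n - 2 := by
      rw [hFi, card_sigL] at hρcard
      omega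
    have hρeq : ρ = (Finset.univ.filter (fun a : ZMod n => inl a ∈ ρ)).image inl := by
      ext e
      constructor
      · intro he
        obtain ⟨a, rfl⟩ := hρall e he
        exact Finset.mem_image.mpr ⟨a, Finset.mem_filter.mpr ⟨Finset.mem_univ a, he⟩, rfl⟩
      · intro he
        obtain ⟨a, haf, rfl⟩ := Finset.mem_image.mp he
        exact (Finset.mem_filter.mp haf).2
    have hAc : (Finset.univ.filter (fun a : ZMod n => inl a ∈ ρ)).card = n - 2 := by
      have hcc := congrArg Finset.card hρeq
      rw [Finset.card_image_of_injective _ Sum.inl_injective] at hcc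
      omega
    have hall : ∀ e ∈ F i0, ∃ a, e = inl a := by
      intro e he
      cases e with
      | inl a => exact ⟨a, rfl⟩
      | inr b =>
        exact absurd he fun hb => no_inr_of_many_inl hn (hFfacet i0).1
          (Finset.univ.filter (fun a : ZMod n => inl a ∈ ρ))
          (fun a ha => hρFi0 ((Finset.mem_filter.mp ha).2)) (le_of_eq hAc.symm) hb
    obtain ⟨j', hj'⟩ := facet_all_inl hn (hFfacet i0) hall
    exact ⟨i0, hi0lt, j', hj'⟩
  have stepR : ∀ i : Fin m, 0 < (i : ℕ) → (∃ j, F i = sigR n j) →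
      ∃ i' : Fin m, (i' : ℕ) < (i : ℕ) ∧ ∃ j', F i' = sigR n j' := by
    rintro i hi ⟨j, hFi⟩
    obtain ⟨ρ, hρFi, ⟨i0, hi0lt, hρFi0⟩, hρcard, -⟩ :=
      hshell i hi ∅ (Finset.empty_subset _)
        ⟨⟨0, hm⟩, by simpa [Fin.lt_def] using hi, Finset.empty_subset _⟩
    have hρall : ∀ e ∈ ρ, ∃ a, e = inr a := by
      intro e he
      have hmem := hρFi he
      rw [hFi] at hmem
      obtain ⟨a, -, rfl⟩ := mem_sigR.mp hmem
      exact ⟨a, rfl⟩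
    have hρc : ρ.card = n - 2 := by
      rw [hFi, card_sigR] at hρcard
      omega
    have hρeq : ρ = (Finset.univ.filter (fun a : ZMod n => inr a ∈ ρ)).image inr := by
      ext e
      constructor
      · intro he
        obtain ⟨a, rfl⟩ := hρall e he
        exact Finset.mem_image.mpr ⟨a, Finset.mem_filter.mpr ⟨Finset.mem_univ a, he⟩, rfl⟩
      · intro he
        obtain ⟨a, haf, rfl⟩ := Finset.mem_image.mp he
        exact (Finset.mem_filter.mp haf).2
    have hAc : (Finset.univ.filter (fun a : ZMod n => inr a ∈ ρ)).card = n - 2 := by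
      have hcc := congrArg Finset.card hρeq
      rw [Finset.card_image_of_injective _ Sum.inr_injective] at hcc
      omega
    have hall : ∀ e ∈ F i0, ∃ a, e = inr a := by
      intro e he
      cases e with
      | inr a => exact ⟨a, rfl⟩
      | inl b =>
        exact absurd he fun hb => no_inl_of_many_inr hn (hFfacet i0).1
          (Finset.univ.filter (fun a : ZMod n => inr a ∈ ρ))
          (fun a ha => hρFi0 ((Finset.mem_filter.mp ha).2)) (le_of_eq hAc.symm) hb
    obtain ⟨j', hj'⟩ := facet_all_inr hn (hFfacet i0) hall
    exact ⟨i0, hi0lt, j', hj'⟩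
  have descendL : ∀ N : ℕ, ∀ i : Fin m, (i : ℕ) < N → (∃ j, F i = sigL n j) →
      ∃ i0 : Fin m, (i0 : ℕ) = 0 ∧ ∃ j, F i0 = sigL n j := by
    intro N
    induction N with
    | zero => intro i hi; omega
    | succ N ih =>
      intro i hi hex
      rcases Nat.eq_zero_or_pos (i : ℕ) with h0 | hpos
      · exact ⟨i, h0, hex⟩
      · obtain ⟨i', hi', hex'⟩ := stepL i hpos hex
        exact ih i' (by omega) hex'
  have descendR : ∀ N : ℕ, ∀ i : Fin m, (i : ℕ) < N → (∃ j, F i = sigR n j) →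
      ∃ i0 : Fin m, (i0 : ℕ) = 0 ∧ ∃ j, F i0 = sigR n j := by
    intro N
    induction N with
    | zero => intro i hi; omega
    | succ N ih =>
      intro i hi hex
      rcases Nat.eq_zero_or_pos (i : ℕ) with h0 | hpos
      · exact ⟨i, h0, hex⟩
      · obtain ⟨i', hi', hex'⟩ := stepR i hpos hex
        exact ih i' (by omega) hex'
  obtain ⟨i0, h00, j0, hj0⟩ := descendL m iL iL.isLt ⟨0, hiL⟩
  obtain ⟨i1, h10, j1, hj1⟩ := descendR m iR iR.isLt ⟨0, hiR⟩
  have hii : i0 = i1 := Fin.ext (by omega)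
  rw [hii, hj1] at hj0
  have hmem : inr (j1 + 1) ∈ sigL n j0 := by
    rw [← hj0]
    exact mem_sigR.mpr ⟨j1 + 1, fun h => one_ne_zero' hn (add_eq_left.mp h), rfl⟩
  obtain ⟨a, -, ha⟩ := mem_sigL.mp hmem
  exact absurd ha (by simp)

end Helpers

/-- For `n ≥ 3`, the facets of the pure `(n−2)`-skeleton of
`Dlf(Pₙ)` are exactly the sets `{eᵢ, …, e_{i−2}}` and `{eᵢ', …, e_{i−2}'}` (that is,
all `eⱼ` except one, resp. all `eⱼ'` except one); this skeleton is disconnected; hence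
`Dlf(Pₙ)` is not sequentially Cohen–Macaulay (over any field) and not shellable. -/
theorem statement_11 (n : ℕ) (hn : 3 ≤ n) [NeZero n] :
    (∀ σ : Finset (ZMod n ⊕ ZMod n),
        IsFacetOf (pureSkel (Dlf (sP n) (tP n)) (n - 2)) σ ↔
        (∃ j : ZMod n,
          σ = (Finset.univ.image (Sum.inl : ZMod n → ZMod n ⊕ ZMod n)).erase
                (Sum.inl j) ∨
          σ = (Finset.univ.image (Sum.inr : ZMod n → ZMod n ⊕ ZMod n)).erase
                (Sum.inr j))) ∧
    ¬ ComplexConnected (pureSkel (Dlf (sP n) (tP n)) (n - 2)) ∧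
    (∀ (K : Type) [Field K], ¬ IsSCM (ZMod n ⊕ ZMod n) K (Dlf (sP n) (tP n))) ∧
    ¬ Shellable (Dlf (sP n) (tP n)) := by
  refine ⟨fun σ => skel_facet_iff hn σ, not_conn hn, fun K hK => @not_SCM n _ hn K hK,
    not_shellable hn⟩

end ArXiv
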